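/- Let V be a nonzero finite-dimensional ℂ-vector space carrying a Q-deformed sl_m-current representation. Then there exists a nonzero vector v₀ ∈ V such that X⁺_{i,t} v₀ = 0 for all i ∈ {1,…,m−1} and all t ∈ ℕ, and for each i ∈ {1,…,m−1} and t ∈ ℕ there exists u_{i,t} ∈ ℂ with J_{i,t} v₀ = u_{i,t}·v₀. -/

import Mathlib

open Finset

/-- The Cartan integers `a_{ji}` of `sl_m`: `2` if `j = i`, `−1` if `|j − i| = 1`, `0` otherwise. -/
def cartan {m : ℕ} (j i : Fin (m - 1)) : ℂ :=
  if j = i then 2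
  else if (j : ℕ) = (i : ℕ) + 1 ∨ (i : ℕ) = (j : ℕ) + 1 then -1 else 0

/-- A `Q`-deformed `sl_m`-current representation on a `ℂ`-vector space `V`:
the relations (L1)–(L6). -/
def IsSlmCurrentRep (m : ℕ) (Q : Fin (m - 1) → ℂ) {V : Type*} [AddCommGroup V] [Module ℂ V]
    (Xp Xm J : Fin (m - 1) → ℕ → Module.End ℂ V) : Prop :=
  (∀ (i j : Fin (m - 1)) (s t : ℕ), J i s * J j t = J j t * J i s) ∧
  (∀ (i j : Fin (m - 1)) (s t : ℕ),
      J j s * Xp i t - Xp i t * J j s = cartan j i • Xp i (s + t)) ∧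
  (∀ (i j : Fin (m - 1)) (s t : ℕ),
      J j s * Xm i t - Xm i t * J j s = -(cartan j i • Xm i (s + t))) ∧
  (∀ (i j : Fin (m - 1)) (s t : ℕ), Xp i t * Xm j s - Xm j s * Xp i t =
      if i = j then J i (s + t) - Q i • J i (s + t + 1) else 0) ∧
  (∀ (i j : Fin (m - 1)) (s t : ℕ), ¬((j : ℕ) = (i : ℕ) + 1 ∨ (i : ℕ) = (j : ℕ) + 1) →
      Xp i t * Xp j s = Xp j s * Xp i t ∧ Xm i t * Xm j s = Xm j s * Xm i t) ∧
  (∀ (i j : Fin (m - 1)) (s t : ℕ), ((j : ℕ) = (i : ℕ) + 1 ∨ (i : ℕ) = (j : ℕ) + 1) →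
      (Xp i (t + 1) * Xp j s - Xp j s * Xp i (t + 1) =
        Xp i t * Xp j (s + 1) - Xp j (s + 1) * Xp i t) ∧
      (Xm i (t + 1) * Xm j s - Xm j s * Xm i (t + 1) =
        Xm i t * Xm j (s + 1) - Xm j (s + 1) * Xm i t)) ∧
  (∀ (i j : Fin (m - 1)) (s t u : ℕ), ((j : ℕ) = (i : ℕ) + 1 ∨ (i : ℕ) = (j : ℕ) + 1) →
      Xp i s * (Xp i t * Xp j u - Xp j u * Xp i t) -
          (Xp i t * Xp j u - Xp j u * Xp i t) * Xp i s = 0 ∧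
      Xm i s * (Xm i t * Xm j u - Xm j u * Xm i t) -
          (Xm i t * Xm j u - Xm j u * Xm i t) * Xm i s = 0)

/-! ### Auxiliary lemmas -/

/-- If `[A,B] = c • B`, then `(A - (μ+c))^k ∘ B = B ∘ (A - μ)^k`. -/
lemma shift_pow {V : Type*} [AddCommGroup V] [Module ℂ V] (A B : Module.End ℂ V) (c μ : ℂ)
    (h : A * B - B * A = c • B) (k : ℕ) :
    (A - (μ + c) • 1) ^ k * B = B * (A - μ • 1) ^ k := by
  have key : (A - (μ + c) • 1) * B = B * (A - μ • 1) := by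
    have h' : A * B = c • B + B * A := sub_eq_iff_eq_add.mp h
    rw [sub_mul, mul_sub, smul_mul_assoc, one_mul, mul_smul_comm, mul_one, h', add_smul]
    abel
  induction k with
  | zero => simp
  | succ k ih => rw [pow_succ, pow_succ, mul_assoc, key, ← mul_assoc, ih, mul_assoc]

/-- Commuting operators: powers of `A - μ` commute with `B`. -/
lemma comm_pow {V : Type*} [AddCommGroup V] [Module ℂ V] (A B : Module.End ℂ V) (μ : ℂ)
    (h : A * B = B * A) (k : ℕ) :
    (A - μ • 1) ^ k * B = B * (A - μ • 1) ^ k := by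
  have := shift_pow A B 0 μ (by rw [h]; simp) k
  simpa using this

/-- The weights used to build the grading operator `H`. -/
def sig (m : ℕ) (j : Fin (m - 1)) : ℂ :=
  (((j:ℕ):ℂ) + 1) * (((m - 1 : ℕ):ℂ) - ((j:ℕ):ℂ))

lemma cartan_split {m : ℕ} (j i : Fin (m - 1)) :
    cartan j i = (if j = i then (2:ℂ) else 0) +
      ((if (j : ℕ) = (i : ℕ) + 1 then (-1:ℂ) else 0) +
       (if (i : ℕ) = (j : ℕ) + 1 then (-1:ℂ) else 0)) := by
  unfold cartan
  rcases eq_or_ne j i with rfl | hne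
  · simp
  · have h1 : (j : ℕ) ≠ (i : ℕ) := fun h => hne (Fin.ext h)
    simp only [if_neg hne]
    split_ifs <;> first | (exfalso; omega) | norm_num

lemma cartan_sum {m : ℕ} (i : Fin (m - 1)) :
    ∑ j : Fin (m - 1), sig m j * cartan j i = 2 := by
  have hilt : (i : ℕ) < m - 1 := i.isLt
  calc ∑ j : Fin (m - 1), sig m j * cartan j i
      = ∑ j : Fin (m - 1), ((if j = i then sig m j * 2 else 0) +
          ((if (j : ℕ) = (i : ℕ) + 1 then sig m j * (-1) else 0) +
           (if (i : ℕ) = (j : ℕ) + 1 then sig m j * (-1) else 0))) := by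
        refine Finset.sum_congr rfl fun j _ => ?_
        rw [cartan_split]
        simp [mul_add, mul_ite]
    _ = sig m i * 2 +
        ((if h1 : (i:ℕ) + 1 < m - 1 then sig m ⟨(i:ℕ)+1, h1⟩ * (-1) else 0) +
         (if h2 : 0 < (i:ℕ) then sig m ⟨(i:ℕ)-1, by omega⟩ * (-1) else 0)) := by
        rw [Finset.sum_add_distrib, Finset.sum_add_distrib]
        congr 1
        · rw [Finset.sum_ite_eq' univ i (fun j => sig m j * 2)]; simp
        congr 1
        · by_cases h1 : (i:ℕ) + 1 < m - 1
          · rw [dif_pos h1, Finset.sum_eq_single (⟨(i:ℕ)+1, h1⟩ : Fin (m-1))]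
            · simp
            · intro j _ hj
              rw [if_neg]
              intro hc
              exact hj (Fin.ext (by simpa using hc))
            · simp
          · rw [dif_neg h1, Finset.sum_eq_zero]
            intro j _
            rw [if_neg]
            have := j.isLt
            omega
        · by_cases h2 : 0 < (i:ℕ)
          · rw [dif_pos h2, Finset.sum_eq_single (⟨(i:ℕ)-1, by omega⟩ : Fin (m-1))]
            · rw [if_pos (by simp only [Fin.val_mk]; omega)]
            · intro j _ hj
              rw [if_neg]
              intro hc
              exact hj (Fin.ext (by simp only [Fin.val_mk]; omega))
            · simp
          · rw [dif_neg h2, Finset.sum_eq_zero]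
            intro j _
            rw [if_neg]
            omega
    _ = 2 := by
        by_cases h1 : (i:ℕ) + 1 < m - 1
        · by_cases h2 : 0 < (i:ℕ)
          · obtain ⟨k, hk⟩ : ∃ k, (i:ℕ) = k + 1 := ⟨(i:ℕ) - 1, by omega⟩
            rw [dif_pos h1, dif_pos h2]
            have hv : (i:ℕ) - 1 = k := by omega
            simp only [sig, Fin.val_mk, hv, hk]
            push_cast
            ring
          · have hi0 : (i:ℕ) = 0 := by omega
            rw [dif_pos h1, dif_neg h2]
            simp only [sig, Fin.val_mk, hi0]
            push_cast
            ring
        · have hin : (i:ℕ) + 1 = m - 1 := by omega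
          by_cases h2 : 0 < (i:ℕ)
          · obtain ⟨k, hk⟩ : ∃ k, (i:ℕ) = k + 1 := ⟨(i:ℕ) - 1, by omega⟩
            rw [dif_neg h1, dif_pos h2]
            have hv : (i:ℕ) - 1 = k := by omega
            have eN : ((m - 1 : ℕ):ℂ) = ((i:ℕ):ℂ) + 1 := by
              have h4 := congrArg (fun t : ℕ => (t:ℂ)) hin
              push_cast at h4
              exact h4.symm
            simp only [sig, Fin.val_mk, hv, eN, hk]
            push_cast
            ring
          · have hi0 : (i:ℕ) = 0 := by omega
            have hn1 : m - 1 = 1 := by omega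
            rw [dif_neg h1, dif_neg h2]
            simp only [sig, Fin.val_mk, hi0, hn1]
            norm_num

universe u

/-- A commuting family of endomorphisms of a nonzero finite-dimensional complex vector space
has a common eigenvector. -/
lemma exists_common_eigenvector_aux (ι : Type*) (n : ℕ) :
    ∀ (W : Type u) [AddCommGroup W] [Module ℂ W] [FiniteDimensional ℂ W] [Nontrivial W],
      Module.finrank ℂ W ≤ n → ∀ (F : ι → Module.End ℂ W),
      (∀ i j, F i * F j = F j * F i) →
      ∃ v : W, v ≠ 0 ∧ ∀ i, ∃ u : ℂ, F i v = u • v := by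
  induction n with
  | zero =>
    intro W _ _ _ _ hle F _
    have := Module.finrank_pos (R := ℂ) (M := W)
    omega
  | succ n ih =>
    intro W _ _ _ _ hle F hcomm
    by_cases hall : ∀ i, ∃ u : ℂ, F i = u • (1 : Module.End ℂ W)
    · obtain ⟨v, hv⟩ := exists_ne (0 : W)
      exact ⟨v, hv, fun i => (hall i).imp fun u hu => by rw [hu]; simp⟩
    · push_neg at hall
      obtain ⟨i₀, hi₀⟩ := hall
      obtain ⟨μ, hμ⟩ := Module.End.exists_eigenvalue (F i₀)
      set E := Module.End.eigenspace (F i₀) μ with hE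
      have hEbot : E ≠ ⊥ := hμ
      have hEtop : E ≠ ⊤ := by
        intro h
        apply hi₀ μ
        ext w
        have hw : w ∈ E := h ▸ Submodule.mem_top
        rw [Module.End.mem_eigenspace_iff] at hw
        simpa using hw
      have hmap : ∀ i, ∀ x ∈ E, F i x ∈ E := by
        intro i x hx
        rw [Module.End.mem_eigenspace_iff] at hx ⊢
        have h1 : F i₀ (F i x) = F i (F i₀ x) :=
          congrArg (fun g => g x) (hcomm i₀ i)
        rw [h1, hx, map_smul]
      haveI : Nontrivial E := Submodule.nontrivial_iff_ne_bot.mpr hEbot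
      have hrank : Module.finrank ℂ E ≤ n := by
        have := Submodule.finrank_lt (K := ℂ) (V := W) hEtop
        omega
      obtain ⟨v, hv0, hv⟩ := ih E hrank (fun i => (F i).restrict (hmap i)) (by
        intro i j
        ext x
        have h1 : F i (F j x) = F j (F i x) := congrArg (fun g => g (x : W)) (hcomm i j)
        simp [Module.End.mul_apply, LinearMap.restrict_apply, h1])
      refine ⟨(v : W), by simpa using hv0, fun i => ?_⟩
      obtain ⟨u, hu⟩ := hv i
      refine ⟨u, ?_⟩
      have := congrArg (Subtype.val) hu
      simpa [LinearMap.restrict_apply] using this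

theorem stmt13 {m : ℕ} (hm : 2 ≤ m) (Q : Fin (m - 1) → ℂ)
    {V : Type*} [AddCommGroup V] [Module ℂ V] [FiniteDimensional ℂ V] [Nontrivial V]
    (Xp Xm J : Fin (m - 1) → ℕ → Module.End ℂ V)
    (hrep : IsSlmCurrentRep m Q Xp Xm J) :
    ∃ v₀ : V, v₀ ≠ 0 ∧ (∀ i t, Xp i t v₀ = 0) ∧
      ∀ i t, ∃ u : ℂ, J i t v₀ = u • v₀ := by
  obtain ⟨hJ, hL2, hL3, hL4, hL5, hL6, hL7⟩ := hrep
  -- the grading operator H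
  set H : Module.End ℂ V := ∑ j : Fin (m-1), sig m j • J j 0 with hH
  have hHX : ∀ (i : Fin (m-1)) (t : ℕ), H * Xp i t - Xp i t * H = (2:ℂ) • Xp i t := by
    intro i t
    have h1 : H * Xp i t - Xp i t * H
        = ∑ j : Fin (m-1), sig m j • (J j 0 * Xp i t - Xp i t * J j 0) := by
      rw [hH, Finset.sum_mul, Finset.mul_sum, ← Finset.sum_sub_distrib]
      refine Finset.sum_congr rfl fun j _ => ?_
      rw [smul_mul_assoc, mul_smul_comm, ← smul_sub]
    rw [h1]
    have h2 : ∀ j : Fin (m-1), J j 0 * Xp i t - Xp i t * J j 0 = cartan j i • Xp i t := by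
      intro j
      have := hL2 i j 0 t
      rwa [Nat.zero_add] at this
    calc ∑ j : Fin (m-1), sig m j • (J j 0 * Xp i t - Xp i t * J j 0)
        = ∑ j : Fin (m-1), (sig m j * cartan j i) • Xp i t := by
          refine Finset.sum_congr rfl fun j _ => ?_
          rw [h2 j, smul_smul]
      _ = (∑ j : Fin (m-1), sig m j * cartan j i) • Xp i t := by
          rw [Finset.sum_smul]
      _ = (2:ℂ) • Xp i t := by rw [cartan_sum i]
  have hHJ : ∀ (i : Fin (m-1)) (t : ℕ), H * J i t = J i t * H := by
    intro i t
    rw [hH, Finset.sum_mul, Finset.mul_sum]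
    refine Finset.sum_congr rfl fun j _ => ?_
    rw [smul_mul_assoc, mul_smul_comm, hJ j i 0 t]
  -- a maximal eigenvalue of H
  obtain ⟨μ₀, hμ₀S, hmax⟩ :
      ∃ μ₀, H.HasEigenvalue μ₀ ∧ ∀ μ, H.HasEigenvalue μ → μ.re ≤ μ₀.re := by
    have hfin := Module.End.finite_hasEigenvalue H
    have hne : {μ | H.HasEigenvalue μ}.Nonempty := Module.End.exists_eigenvalue H
    obtain ⟨μ₀, hμ₀, hmaxw⟩ := Set.Finite.exists_maximalFor Complex.re _ hfin hne
    refine ⟨μ₀, hμ₀, fun μ hμ => ?_⟩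
    by_contra hlt
    push_neg at hlt
    have := hmaxw hμ hlt.le
    linarith
  set W := H.maxGenEigenspace μ₀ with hW
  have hWne : W ≠ ⊥ := by
    obtain ⟨v, hv⟩ := hμ₀S.exists_hasEigenvector
    refine (Submodule.ne_bot_iff _).mpr ⟨v, ?_, hv.right⟩
    rw [hW, Module.End.mem_maxGenEigenspace]
    refine ⟨1, ?_⟩
    rw [pow_one]
    simp [LinearMap.sub_apply, hv.apply_eq_smul]
  -- Xp kills W
  have hXpW : ∀ (i : Fin (m-1)) (t : ℕ), ∀ v ∈ W, Xp i t v = 0 := by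
    intro i t v hv
    rw [hW, Module.End.mem_maxGenEigenspace] at hv
    obtain ⟨k, hk⟩ := hv
    by_contra hne0
    have hkey := shift_pow H (Xp i t) 2 μ₀ (hHX i t) k
    have hzero : ((H - (μ₀ + 2) • 1) ^ k) (Xp i t v) = 0 := by
      have h3 := congrArg (fun g : Module.End ℂ V => g v) hkey
      simp only [Module.End.mul_apply] at h3
      rw [h3, hk, map_zero]
    have hgen : H.HasGenEigenvalue (μ₀ + 2) k := by
      rw [Module.End.hasGenEigenvalue_iff]
      refine (Submodule.ne_bot_iff _).mpr ⟨Xp i t v, ?_, hne0⟩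
      rw [Module.End.genEigenspace_nat, LinearMap.mem_ker]
      exact hzero
    have h4 := Module.End.hasEigenvalue_of_hasGenEigenvalue hgen
    have h5 := hmax _ h4
    have h6 : (μ₀ + 2).re = μ₀.re + 2 := by simp
    linarith [h6 ▸ h5]
  -- J preserves W
  have hJW : ∀ (i : Fin (m-1)) (t : ℕ), ∀ v ∈ W, J i t v ∈ W := by
    intro i t v hv
    rw [hW, Module.End.mem_maxGenEigenspace] at hv ⊢
    obtain ⟨k, hk⟩ := hv
    refine ⟨k, ?_⟩
    have hkey := comm_pow H (J i t) μ₀ (hHJ i t) k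
    have h3 := congrArg (fun g : Module.End ℂ V => g v) hkey
    simp only [Module.End.mul_apply] at h3
    rw [h3, hk, map_zero]
  haveI : Nontrivial W := Submodule.nontrivial_iff_ne_bot.mpr hWne
  obtain ⟨v, hv0, hv⟩ := exists_common_eigenvector_aux (Fin (m-1) × ℕ) (Module.finrank ℂ W) W
    le_rfl (fun p => (J p.1 p.2).restrict (hJW p.1 p.2)) (by
      intro p q
      ext x
      have h1 : J p.1 p.2 (J q.1 q.2 (x:V)) = J q.1 q.2 (J p.1 p.2 (x:V)) := by
        have := congrArg (fun g : Module.End ℂ V => g (x:V)) (hJ p.1 q.1 p.2 q.2)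
        simpa [Module.End.mul_apply] using this
      simp [Module.End.mul_apply, LinearMap.restrict_apply, h1])
  refine ⟨(v : V), by simpa using hv0, fun i t => hXpW i t (v : V) v.2, fun i t => ?_⟩
  obtain ⟨u, hu⟩ := hv (i, t)
  refine ⟨u, ?_⟩
  have := congrArg Subtype.val hu
  simpa [LinearMap.restrict_apply] using this
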